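/- Let p_z ∈ (0,1), ω ≥ 0, C_u ≥ 0, define J(Ω) = ((1−p_z)/(Ω(1−p_z)+p_z)) · ( (Ω² − Ω)/2 + (Ω + ω·C_u)/(1−p_z) + p_z/(1−p_z)² ), and set Ω* = (√(p_z + 2ω·C_u·(1−p_z)) − p_z)/(1−p_z). Then the derivative of J vanishes at Ω*; equivalently, Ω* is the unique nonnegative root of the quadratic equation (1−p_z)·Ω² + 2p_z·Ω − (p_z + 2ω·C_u) = 0. -/

import Mathlib

/-- the derivative of the total average cost `J` vanishes at
`Ω* = (√(p_z + 2ω·C_u·(1−p_z)) − p_z)/(1−p_z)`; equivalently, `Ω*` is the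
unique nonnegative root of `(1−p_z)·Ω² + 2p_z·Ω − (p_z + 2ω·C_u) = 0`. -/
theorem deriv_vanishes_at_threshold (p_z ω C_u : ℝ)
    (hpz0 : 0 < p_z) (hpz1 : p_z < 1) (hω : 0 ≤ ω) (hCu : 0 ≤ C_u)
    (J : ℝ → ℝ)
    (hJ : ∀ Ω : ℝ, J Ω = (1 - p_z) / (Ω * (1 - p_z) + p_z) *
      ((Ω ^ 2 - Ω) / 2 + (Ω + ω * C_u) / (1 - p_z) + p_z / (1 - p_z) ^ 2))
    (Ωstar : ℝ)
    (hΩstar : Ωstar = (Real.sqrt (p_z + 2 * ω * C_u * (1 - p_z)) - p_z) / (1 - p_z)) :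
    deriv J Ωstar = 0 ∧
    (0 ≤ Ωstar ∧ (1 - p_z) * Ωstar ^ 2 + 2 * p_z * Ωstar - (p_z + 2 * ω * C_u) = 0 ∧
      ∀ x : ℝ, 0 ≤ x →
        (1 - p_z) * x ^ 2 + 2 * p_z * x - (p_z + 2 * ω * C_u) = 0 → x = Ωstar) := by
  have hq : (0:ℝ) < 1 - p_z := by linarith
  set s := Real.sqrt (p_z + 2 * ω * C_u * (1 - p_z)) with hs
  have hprod : (0:ℝ) ≤ 2 * ω * C_u * (1 - p_z) :=
    mul_nonneg (mul_nonneg (mul_nonneg (by norm_num) hω) hCu) hq.le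
  have harg : (0:ℝ) ≤ p_z + 2 * ω * C_u * (1 - p_z) := by linarith
  have hs2 : s ^ 2 = p_z + 2 * ω * C_u * (1 - p_z) := Real.sq_sqrt harg
  have hs0 : 0 < s := Real.sqrt_pos.mpr (by linarith)
  have hsp : p_z ≤ s := by nlinarith [hs2, hprod, hs0]
  have hΩ0 : 0 ≤ Ωstar := by
    rw [hΩstar]; exact div_nonneg (by linarith) (le_of_lt hq)
  have hquad : (1 - p_z) * Ωstar ^ 2 + 2 * p_z * Ωstar - (p_z + 2 * ω * C_u) = 0 := by
    rw [hΩstar]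
    field_simp
    nlinarith [hs2]
  have hDval : Ωstar * (1 - p_z) + p_z = s := by
    rw [hΩstar]; field_simp; ring
  have hDne : Ωstar * (1 - p_z) + p_z ≠ 0 := by rw [hDval]; exact ne_of_gt hs0
  refine ⟨?_, hΩ0, hquad, ?_⟩
  · have hJfun : J = fun Ω => (1 - p_z) / (Ω * (1 - p_z) + p_z) *
        ((Ω ^ 2 - Ω) / 2 + (Ω + ω * C_u) / (1 - p_z) + p_z / (1 - p_z) ^ 2) :=
      funext hJ
    have h1 : HasDerivAt (fun Ω : ℝ => Ω * (1 - p_z) + p_z) (1 - p_z) Ωstar := by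
      simpa using ((hasDerivAt_id Ωstar).mul_const (1 - p_z)).add_const p_z
    have h2 : HasDerivAt (fun Ω : ℝ => (1 - p_z) / (Ω * (1 - p_z) + p_z))
        ((0 * (Ωstar * (1 - p_z) + p_z) - (1 - p_z) * (1 - p_z)) /
          (Ωstar * (1 - p_z) + p_z) ^ 2) Ωstar :=
      (hasDerivAt_const Ωstar (1 - p_z)).div h1 hDne
    have h3 : HasDerivAt (fun Ω : ℝ =>
        (Ω ^ 2 - Ω) / 2 + (Ω + ω * C_u) / (1 - p_z) + p_z / (1 - p_z) ^ 2)
        ((2 * Ωstar - 1) / 2 + 1 / (1 - p_z)) Ωstar := by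
      have ha : HasDerivAt (fun Ω : ℝ => (Ω ^ 2 - Ω) / 2) ((2 * Ωstar - 1) / 2) Ωstar := by
        have := ((hasDerivAt_pow 2 Ωstar).sub (hasDerivAt_id Ωstar)).div_const 2
        simpa using this
      have hb : HasDerivAt (fun Ω : ℝ => (Ω + ω * C_u) / (1 - p_z)) (1 / (1 - p_z)) Ωstar := by
        have := ((hasDerivAt_id Ωstar).add_const (ω * C_u)).div_const (1 - p_z)
        simpa using this
      simpa using (ha.add hb).add_const (p_z / (1 - p_z) ^ 2)
    have hJ' : HasDerivAt (fun Ω : ℝ => (1 - p_z) / (Ω * (1 - p_z) + p_z) *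
        ((Ω ^ 2 - Ω) / 2 + (Ω + ω * C_u) / (1 - p_z) + p_z / (1 - p_z) ^ 2)) _ Ωstar := h2.mul h3
    rw [hJfun, hJ'.deriv]
    have hqne : (1 - p_z) ≠ 0 := ne_of_gt hq
    have hkey : (0 * (Ωstar * (1 - p_z) + p_z) - (1 - p_z) * (1 - p_z)) /
          (Ωstar * (1 - p_z) + p_z) ^ 2 *
        ((Ωstar ^ 2 - Ωstar) / 2 + (Ωstar + ω * C_u) / (1 - p_z) + p_z / (1 - p_z) ^ 2) +
        (1 - p_z) / (Ωstar * (1 - p_z) + p_z) * ((2 * Ωstar - 1) / 2 + 1 / (1 - p_z)) =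
        (1 - p_z) / (Ωstar * (1 - p_z) + p_z) ^ 2 *
          (((1 - p_z) * Ωstar ^ 2 + 2 * p_z * Ωstar - (p_z + 2 * ω * C_u)) / 2) := by
      field_simp
      ring
    rw [hkey, hquad]
    simp
  · intro x hx hxeq
    have hfac : (x - Ωstar) * ((1 - p_z) * (x + Ωstar) + 2 * p_z) = 0 := by
      linear_combination hxeq - hquad
    have hpos : (1 - p_z) * (x + Ωstar) + 2 * p_z > 0 := by nlinarith
    have := mul_eq_zero.mp hfac
    rcases this with h | h
    · linarith
    · linarith
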